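/- Let ξ < 0, μ ∈ ℝ, σ > 0, and let s ∈ {+1, −1}. If X is a random variable with distribution function L_{1,ξ}(·; μ, σ) (when s = +1) or L_{2,ξ}(·; μ, σ) (when s = −1), then the Shannon entropy of X is H(X) = μ + log σ + (1 + ξ)γ + s · (σ/ξ)(Γ(1 − ξ) − 1) + 1. -/

import Mathlib

open MeasureTheory Filter Real Set

/-- The Shannon entropy `H(f) = -∫_{{f > 0}} f x * log (f x) dx` of a density `f`
with respect to Lebesgue measure. -/
noncomputable def shannonEntropy (f : ℝ → ℝ) : ℝ :=
  -∫ x in {x : ℝ | 0 < f x}, f x * Real.log (f x)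

/-- Density of the (power) GEV family with sign `s` (`s = 1` gives the log-GEV
density `l_{1,ξ}` on positive support, `s = -1` the negative log-GEV density
`l_{2,ξ}` on negative support):
`l(x) = (1/(σ|x|)) (1 + s ξ (log|x| - μ)/σ)_+^{-1-1/ξ} exp(-(1 + s ξ (log|x| - μ)/σ)_+^{-1/ξ})`. -/
noncomputable def pgevPdf (s ξ μ σ x : ℝ) : ℝ :=
  if 0 < s * x ∧ 0 < 1 + s * ξ * ((Real.log |x| - μ) / σ) then
    (1 / (σ * |x|)) * (1 + s * ξ * ((Real.log |x| - μ) / σ)) ^ (-1 - 1 / ξ) *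
      Real.exp (-(1 + s * ξ * ((Real.log |x| - μ) / σ)) ^ (-1 / ξ))
  else 0

/-- Density of the GEV distribution `G_ξ(·; μ, σ)`:
`g(x) = (1/σ) (1 + ξ (x - μ)/σ)_+^{-1-1/ξ} exp(-(1 + ξ (x - μ)/σ)_+^{-1/ξ})`. -/
noncomputable def gevPdf (ξ μ σ x : ℝ) : ℝ :=
  if 0 < 1 + (ξ / σ) * (x - μ) then
    (1 / σ) * (1 + (ξ / σ) * (x - μ)) ^ (-1 - 1 / ξ) *
      Real.exp (-(1 + (ξ / σ) * (x - μ)) ^ (-1 / ξ))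
  else 0


lemma integrable_log_mul_exp_neg :
    IntegrableOn (fun t : ℝ => Real.log t * Real.exp (-t)) (Ioi 0) := by
  have h1 := Real.GammaIntegral_convergent (s := 1/2) (by norm_num)
  have h2 := Real.GammaIntegral_convergent (s := 2) (by norm_num)
  refine ((h1.const_mul 2).add h2).mono' ?_ ?_
  · exact (Real.measurable_log.mul (by fun_prop)).aestronglyMeasurable
  · filter_upwards [ae_restrict_mem measurableSet_Ioi] with t ht
    have ht' : (0:ℝ) < t := ht
    simp only [norm_mul, Real.norm_eq_abs, Real.abs_exp, Pi.add_apply]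
    have he : (0:ℝ) < Real.exp (-t) := Real.exp_pos _
    rcases le_total t 1 with h | h
    · have hlog : |Real.log t| ≤ 2 * t ^ ((1:ℝ)/2 - 1) := by
        rw [abs_of_nonpos (Real.log_nonpos ht'.le h)]
        have := Real.log_le_rpow_div (x := t⁻¹) (by positivity) (ε := 1/2) (by norm_num)
        rw [Real.log_inv] at this
        calc -Real.log t ≤ t⁻¹ ^ ((1:ℝ)/2) / (1/2) := this
          _ = 2 * t ^ ((1:ℝ)/2 - 1) := by
              rw [← Real.rpow_neg_one t, ← Real.rpow_mul ht'.le]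
              norm_num
              ring
      have h2' : (0:ℝ) ≤ Real.exp (-t) * t ^ ((2:ℝ)-1) := by positivity
      calc |Real.log t| * Real.exp (-t) ≤ (2 * t ^ ((1:ℝ)/2 - 1)) * Real.exp (-t) :=
            mul_le_mul_of_nonneg_right hlog he.le
        _ = 2 * (Real.exp (-t) * t ^ ((1:ℝ)/2 - 1)) + 0 := by ring
        _ ≤ 2 * (Real.exp (-t) * t ^ ((1:ℝ)/2 - 1)) + Real.exp (-t) * t ^ ((2:ℝ)-1) :=
            add_le_add_right h2' _
    · have hlog : |Real.log t| ≤ t ^ ((2:ℝ)-1) := by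
        rw [abs_of_nonneg (Real.log_nonneg h)]
        rw [show ((2:ℝ)-1) = 1 by norm_num, Real.rpow_one]
        linarith [Real.log_le_sub_one_of_pos ht']
      have h1' : (0:ℝ) ≤ 2 * (Real.exp (-t) * t ^ ((1:ℝ)/2 - 1)) := by positivity
      calc |Real.log t| * Real.exp (-t) ≤ t ^ ((2:ℝ)-1) * Real.exp (-t) :=
            mul_le_mul_of_nonneg_right hlog he.le
        _ = 0 + Real.exp (-t) * t ^ ((2:ℝ)-1) := by ring
        _ ≤ 2 * (Real.exp (-t) * t ^ ((1:ℝ)/2 - 1)) + Real.exp (-t) * t ^ ((2:ℝ)-1) :=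
            add_le_add_left h1' _

lemma integral_log_mul_exp_neg :
    ∫ t in Ioi (0:ℝ), Real.log t * Real.exp (-t) = -Real.eulerMascheroniConstant := by
  set I : ℝ := ∫ t in Ioi (0:ℝ), Real.log t * Real.exp (-t) with hI
  have hc : HasDerivAt Complex.GammaIntegral ((I : ℂ)) 1 := by
    have h := Complex.hasDerivAt_GammaIntegral (s := 1) (by norm_num)
    have heq : (∫ t : ℝ in Ioi 0, (t : ℂ) ^ ((1:ℂ) - 1) * (Real.log t * Real.exp (-t))) = (I : ℂ) := by
      rw [hI]
      rw [show ((∫ (t : ℝ) in Ioi 0, log t * rexp (-t) : ℝ) : ℂ)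
          = ∫ (t : ℝ) in Ioi 0, ((log t * rexp (-t) : ℝ) : ℂ) from (integral_ofReal (𝕜 := ℂ)).symm]
      refine setIntegral_congr_fun measurableSet_Ioi (fun t ht => ?_)
      push_cast
      simp
    rwa [heq] at h
  have hcG : HasDerivAt Complex.Gamma ((I : ℂ)) 1 := by
    refine hc.congr_of_eventuallyEq ?_
    have hopen : IsOpen {s : ℂ | 0 < s.re} := isOpen_lt continuous_const Complex.continuous_re
    filter_upwards [hopen.mem_nhds (by norm_num : (0:ℝ) < (1:ℂ).re)] with z hz
    exact Complex.Gamma_eq_integral hz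
  have hr : HasDerivAt Real.Gamma I 1 := by
    have := hcG.real_of_complex
    simpa [Complex.Gamma_ofReal] using this
  have := hr.unique Real.hasDerivAt_Gamma_one
  linarith

section Main
variable {ξ μ σ s : ℝ}

lemma support_eq (hξ : ξ < 0) (hσ : 0 < σ) (hs : s = 1 ∨ s = -1) :
    {x : ℝ | 0 < pgevPdf s ξ μ σ x}
      = (fun t : ℝ => s * Real.exp (μ + s * σ * (t ^ (-ξ) - 1) / ξ)) '' Ioi 0 := by
  have hs0 : s ≠ 0 := by rcases hs with h | h <;> simp [h]
  have hss : s * s = 1 := by rcases hs with h | h <;> simp [h]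
  have habs : |s| = 1 := by rcases hs with h | h <;> simp [h]
  ext x
  simp only [mem_setOf_eq, mem_image, mem_Ioi]
  constructor
  · intro hx
    have hcond : 0 < s * x ∧ 0 < 1 + s * ξ * ((Real.log |x| - μ) / σ) := by
      by_contra h
      rw [pgevPdf, if_neg h] at hx
      exact lt_irrefl 0 hx
    obtain ⟨h1, h2⟩ := hcond
    have hxne : x ≠ 0 := fun h => by simp [h] at h1
    refine ⟨(1 + s * ξ * ((Real.log |x| - μ) / σ)) ^ (-1/ξ), Real.rpow_pos_of_pos h2 _, ?_⟩
    have hw : ((1 + s * ξ * ((Real.log |x| - μ) / σ)) ^ (-1/ξ)) ^ (-ξ)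
        = 1 + s * ξ * ((Real.log |x| - μ) / σ) := by
      rw [← Real.rpow_mul h2.le]
      rw [show (-1/ξ) * (-ξ) = 1 by field_simp [hξ.ne]]
      exact Real.rpow_one _
    rw [hw]
    have harg : μ + s * σ * ((1 + s * ξ * ((Real.log |x| - μ) / σ)) - 1) / ξ = Real.log |x| := by
      simp only [Real.log_abs]
      field_simp [hσ.ne', hξ.ne]
      linear_combination (ξ * (Real.log x - μ)) * hss
    rw [harg, Real.exp_log (abs_pos.mpr hxne)]
    rcases hs with h | h
    · subst h; rw [one_mul, abs_of_pos (by linarith [h1] : 0 < x)]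
    · subst h
      rw [abs_of_neg (by nlinarith [h1] : x < 0)]
      ring
  · rintro ⟨t, ht, rfl⟩
    have hE : (0:ℝ) < Real.exp (μ + s * σ * (t ^ (-ξ) - 1) / ξ) := Real.exp_pos _
    have h1 : 0 < s * (s * Real.exp (μ + s * σ * (t ^ (-ξ) - 1) / ξ)) := by
      rw [← mul_assoc, hss, one_mul]; exact hE
    have habs2 : |s * Real.exp (μ + s * σ * (t ^ (-ξ) - 1) / ξ)|
        = Real.exp (μ + s * σ * (t ^ (-ξ) - 1) / ξ) := by
      rw [abs_mul, habs, one_mul, Real.abs_exp]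
    have h2 : 1 + s * ξ * ((Real.log |s * Real.exp (μ + s * σ * (t ^ (-ξ) - 1) / ξ)| - μ) / σ)
        = t ^ (-ξ) := by
      rw [habs2, Real.log_exp]
      field_simp [hσ.ne', hξ.ne]
      linear_combination (σ * (t ^ (-ξ) - 1)) * hss
    have hw : (0:ℝ) < t ^ (-ξ) := Real.rpow_pos_of_pos ht _
    rw [pgevPdf, if_pos ⟨h1, by rw [h2]; exact hw⟩, h2]
    have hden : (0:ℝ) < σ * |s * Real.exp (μ + s * σ * (t ^ (-ξ) - 1) / ξ)| := by
      rw [habs2]; positivity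
    exact mul_pos (mul_pos (by rw [one_div]; exact inv_pos.mpr hden)
      (Real.rpow_pos_of_pos hw _)) (Real.exp_pos _)
end Main

section Main2
variable {ξ μ σ s : ℝ}

lemma phi_hasDeriv (hξ : ξ < 0) (hσ : 0 < σ) (hss : s * s = 1) {t : ℝ} (ht : 0 < t) :
    HasDerivAt (fun t : ℝ => s * Real.exp (μ + s * σ * (t ^ (-ξ) - 1) / ξ))
      (-(σ * t ^ (-ξ - 1) * Real.exp (μ + s * σ * (t ^ (-ξ) - 1) / ξ))) t := by
  have h1 : HasDerivAt (fun t : ℝ => t ^ (-ξ)) (-ξ * t ^ (-ξ - 1)) t :=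
    Real.hasDerivAt_rpow_const (Or.inl ht.ne')
  have h2 : HasDerivAt (fun t : ℝ => μ + s * σ * (t ^ (-ξ) - 1) / ξ)
      (s * σ * (-ξ * t ^ (-ξ - 1)) / ξ) t :=
    (((h1.sub_const 1).const_mul (s * σ)).div_const ξ).const_add μ
  have h3 := (h2.exp).const_mul s
  refine HasDerivAt.congr_deriv h3 ?_
  have : s * (Real.exp (μ + s * σ * (t ^ (-ξ) - 1) / ξ) * (s * σ * (-ξ * t ^ (-ξ - 1)) / ξ))
      = (s * s) * ((ξ * ξ⁻¹) * (-(σ * t ^ (-ξ - 1) * Real.exp (μ + s * σ * (t ^ (-ξ) - 1) / ξ)))) := by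
    ring
  rw [this, hss, mul_inv_cancel₀ hξ.ne, one_mul, one_mul]

lemma phi_injOn (hξ : ξ < 0) (hσ : 0 < σ) (hs0 : s ≠ 0) :
    InjOn (fun t : ℝ => s * Real.exp (μ + s * σ * (t ^ (-ξ) - 1) / ξ)) (Ioi 0) := by
  intro a ha b hb h
  simp only at h
  have h1 : Real.exp (μ + s * σ * (a ^ (-ξ) - 1) / ξ) = Real.exp (μ + s * σ * (b ^ (-ξ) - 1) / ξ) :=
    mul_left_cancel₀ hs0 h
  have h2 : μ + s * σ * (a ^ (-ξ) - 1) / ξ = μ + s * σ * (b ^ (-ξ) - 1) / ξ :=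
    Real.exp_injective h1
  have h3 : a ^ (-ξ) = b ^ (-ξ) := by
    have h2' : s * σ * (a ^ (-ξ) - 1) / ξ = s * σ * (b ^ (-ξ) - 1) / ξ := by linarith
    field_simp [hξ.ne] at h2'
    linarith
  have h4 : (a ^ (-ξ)) ^ (-ξ)⁻¹ = (b ^ (-ξ)) ^ (-ξ)⁻¹ := by rw [h3]
  rwa [← Real.rpow_mul (le_of_lt ha), ← Real.rpow_mul (le_of_lt hb),
    mul_inv_cancel₀ (by linarith : -ξ ≠ 0), Real.rpow_one, Real.rpow_one] at h4

end Main2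

section Main3
variable {ξ μ σ s : ℝ}

lemma pdf_phi (hξ : ξ < 0) (hσ : 0 < σ) (hs : s = 1 ∨ s = -1) {t : ℝ} (ht : 0 < t) :
    pgevPdf s ξ μ σ (s * Real.exp (μ + s * σ * (t ^ (-ξ) - 1) / ξ))
      = (1 / σ) * Real.exp (-(μ + s * σ * (t ^ (-ξ) - 1) / ξ)) * t ^ (ξ + 1) * Real.exp (-t) := by
  have hs0 : s ≠ 0 := by rcases hs with h | h <;> simp [h]
  have hss : s * s = 1 := by rcases hs with h | h <;> simp [h]
  have habs : |s| = 1 := by rcases hs with h | h <;> simp [h]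
  have hE : (0:ℝ) < Real.exp (μ + s * σ * (t ^ (-ξ) - 1) / ξ) := Real.exp_pos _
  have habs2 : |s * Real.exp (μ + s * σ * (t ^ (-ξ) - 1) / ξ)|
      = Real.exp (μ + s * σ * (t ^ (-ξ) - 1) / ξ) := by
    rw [abs_mul, habs, one_mul, Real.abs_exp]
  have h1 : 0 < s * (s * Real.exp (μ + s * σ * (t ^ (-ξ) - 1) / ξ)) := by
    rw [← mul_assoc, hss, one_mul]; exact hE
  have h2 : 1 + s * ξ * ((Real.log |s * Real.exp (μ + s * σ * (t ^ (-ξ) - 1) / ξ)| - μ) / σ)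
      = t ^ (-ξ) := by
    rw [habs2, Real.log_exp]
    field_simp [hσ.ne', hξ.ne]
    linear_combination (σ * (t ^ (-ξ) - 1)) * hss
  have hw : (0:ℝ) < t ^ (-ξ) := Real.rpow_pos_of_pos ht _
  rw [pgevPdf, if_pos ⟨h1, by rw [h2]; exact hw⟩, h2, habs2]
  have e1 : (t ^ (-ξ)) ^ (-1 - 1/ξ) = t ^ (ξ + 1) := by
    rw [← Real.rpow_mul ht.le, show (-ξ) * (-1 - 1/ξ) = ξ + 1 by field_simp [hξ.ne]; ring]
  have e2 : (t ^ (-ξ)) ^ (-1/ξ) = t := by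
    rw [← Real.rpow_mul ht.le, show (-ξ) * (-1/ξ) = 1 by field_simp [hξ.ne], Real.rpow_one]
  rw [e1, e2]
  simp only [Real.exp_neg, one_div, mul_inv]

lemma integrand_eq (hξ : ξ < 0) (hσ : 0 < σ) (hs : s = 1 ∨ s = -1) {t : ℝ} (ht : t ∈ Ioi (0:ℝ)) :
    |(fun t : ℝ => -(σ * t ^ (-ξ - 1) * Real.exp (μ + s * σ * (t ^ (-ξ) - 1) / ξ))) t| •
      (pgevPdf s ξ μ σ ((fun t : ℝ => s * Real.exp (μ + s * σ * (t ^ (-ξ) - 1) / ξ)) t) *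
        Real.log (pgevPdf s ξ μ σ ((fun t : ℝ => s * Real.exp (μ + s * σ * (t ^ (-ξ) - 1) / ξ)) t)))
      = (-(Real.log σ) - μ + s * σ / ξ) * (Real.exp (-t) * t ^ ((1:ℝ) - 1))
        + (-1) * (Real.exp (-t) * t ^ ((2:ℝ) - 1))
        + (-(s * σ / ξ)) * (Real.exp (-t) * t ^ ((1 - ξ) - 1))
        + (ξ + 1) * (Real.log t * Real.exp (-t)) := by
  have ht' : (0:ℝ) < t := ht
  have hE : (0:ℝ) < Real.exp (μ + s * σ * (t ^ (-ξ) - 1) / ξ) := Real.exp_pos _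
  simp only [pdf_phi hξ hσ hs ht', smul_eq_mul]
  have habs : |(-(σ * t ^ (-ξ - 1) * Real.exp (μ + s * σ * (t ^ (-ξ) - 1) / ξ)))|
      = σ * t ^ (-ξ - 1) * Real.exp (μ + s * σ * (t ^ (-ξ) - 1) / ξ) := by
    rw [abs_neg, abs_of_pos]
    have := Real.rpow_pos_of_pos ht' (-ξ - 1)
    positivity
  rw [habs]
  have hlog : Real.log ((1 / σ) * Real.exp (-(μ + s * σ * (t ^ (-ξ) - 1) / ξ)) * t ^ (ξ + 1)
        * Real.exp (-t))
      = -Real.log σ + (-(μ + s * σ * (t ^ (-ξ) - 1) / ξ)) + (ξ + 1) * Real.log t + (-t) := by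
    have hp1 : (0:ℝ) < 1 / σ := by positivity
    have hp3 : (0:ℝ) < t ^ (ξ + 1) := Real.rpow_pos_of_pos ht' _
    rw [Real.log_mul (by positivity) (Real.exp_pos _).ne',
      Real.log_mul (by positivity) hp3.ne',
      Real.log_mul hp1.ne' (Real.exp_pos _).ne',
      Real.log_exp, Real.log_exp, Real.log_rpow ht', one_div, Real.log_inv]
  rw [hlog]
  have hcanc : t ^ (-ξ - 1) * t ^ (ξ + 1) = 1 := by
    rw [← Real.rpow_add ht', show (-ξ - 1) + (ξ + 1) = 0 by ring, Real.rpow_zero]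
  have h10 : t ^ ((1:ℝ) - 1) = 1 := by rw [show (1:ℝ) - 1 = 0 by ring, Real.rpow_zero]
  have h21 : t ^ ((2:ℝ) - 1) = t := by rw [show (2:ℝ) - 1 = 1 by ring, Real.rpow_one]
  have h1m : t ^ ((1 - ξ) - 1) = t ^ (-ξ) := by rw [show (1 - ξ) - 1 = -ξ by ring]
  rw [h10, h21, h1m]
  have hEi : Real.exp (μ + s * σ * (t ^ (-ξ) - 1) / ξ)
      * Real.exp (-(μ + s * σ * (t ^ (-ξ) - 1) / ξ)) = 1 := by
    rw [← Real.exp_add, show μ + s * σ * (t ^ (-ξ) - 1) / ξ + -(μ + s * σ * (t ^ (-ξ) - 1) / ξ)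
      = (0:ℝ) by ring, Real.exp_zero]
  have hu : σ * (1/σ) = 1 := mul_one_div_cancel hσ.ne'
  linear_combination
      ((t ^ (-ξ-1) * t ^ (ξ+1)) * (Real.exp (μ + s * σ * (t ^ (-ξ) - 1) / ξ)
          * Real.exp (-(μ + s * σ * (t ^ (-ξ) - 1) / ξ)))
        * (Real.exp (-t) * (-Real.log σ + -(μ + s * σ * (t ^ (-ξ) - 1) / ξ)
            + (ξ + 1) * Real.log t + -t))) * hu
    + ((Real.exp (μ + s * σ * (t ^ (-ξ) - 1) / ξ)
          * Real.exp (-(μ + s * σ * (t ^ (-ξ) - 1) / ξ)))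
        * (Real.exp (-t) * (-Real.log σ + -(μ + s * σ * (t ^ (-ξ) - 1) / ξ)
            + (ξ + 1) * Real.log t + -t))) * hcanc
    + (Real.exp (-t) * (-Real.log σ + -(μ + s * σ * (t ^ (-ξ) - 1) / ξ)
        + (ξ + 1) * Real.log t + -t)) * hEi

end Main3

/-- For `ξ < 0`, `μ ∈ ℝ`, `σ > 0` and `s ∈ {+1, -1}`, if `X` is a
random variable with distribution function `L_{1,ξ}(·; μ, σ)` (when `s = 1`) or
`L_{2,ξ}(·; μ, σ)` (when `s = -1`), i.e. with density `pgevPdf s ξ μ σ`, then the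
Shannon entropy of `X` is
`H(X) = μ + log σ + (1 + ξ)γ + s (σ/ξ)(Γ(1 - ξ) - 1) + 1`. -/
theorem stmt_11 {Ω : Type*} [MeasurableSpace Ω] (P : Measure Ω) [IsProbabilityMeasure P]
    (ξ μ σ s : ℝ) (hξ : ξ < 0) (hσ : 0 < σ) (hs : s = 1 ∨ s = -1)
    (X : Ω → ℝ) (hXm : Measurable X)
    (hX : Measure.map X P =
      MeasureTheory.Measure.withDensity volume (fun x => ENNReal.ofReal (pgevPdf s ξ μ σ x))) :
    shannonEntropy (pgevPdf s ξ μ σ) =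
      μ + Real.log σ + (1 + ξ) * Real.eulerMascheroniConstant +
        s * (σ / ξ) * (Real.Gamma (1 - ξ) - 1) + 1 := by

  have hs0 : s ≠ 0 := by rcases hs with h | h <;> simp [h]
  have hss : s * s = 1 := by rcases hs with h | h <;> simp [h]
  unfold shannonEntropy
  rw [support_eq hξ hσ hs]
  rw [integral_image_eq_integral_abs_deriv_smul measurableSet_Ioi
      (fun t ht => (phi_hasDeriv (μ := μ) hξ hσ hss (mem_Ioi.mp ht)).hasDerivWithinAt)
      (phi_injOn hξ hσ hs0)]
  rw [setIntegral_congr_fun measurableSet_Ioi (fun t ht => integrand_eq hξ hσ hs ht)]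
  have i1 : IntegrableOn (fun x : ℝ => Real.exp (-x) * x ^ ((1:ℝ) - 1)) (Ioi 0) :=
    Real.GammaIntegral_convergent one_pos
  have i2 : IntegrableOn (fun x : ℝ => Real.exp (-x) * x ^ ((2:ℝ) - 1)) (Ioi 0) :=
    Real.GammaIntegral_convergent (by norm_num)
  have i3 : IntegrableOn (fun x : ℝ => Real.exp (-x) * x ^ ((1 - ξ) - 1)) (Ioi 0) :=
    Real.GammaIntegral_convergent (by linarith)
  have i4 : IntegrableOn (fun t : ℝ => Real.log t * Real.exp (-t)) (Ioi 0) :=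
    integrable_log_mul_exp_neg
  have j1 : IntegrableOn (fun x : ℝ =>
      (-(Real.log σ) - μ + s * σ / ξ) * (Real.exp (-x) * x ^ ((1:ℝ) - 1))) (Ioi 0) := by
    exact i1.const_mul _
  have j2 : IntegrableOn (fun x : ℝ =>
      (-1 : ℝ) * (Real.exp (-x) * x ^ ((2:ℝ) - 1))) (Ioi 0) := by
    exact i2.const_mul _
  have j3 : IntegrableOn (fun x : ℝ =>
      (-(s * σ / ξ)) * (Real.exp (-x) * x ^ ((1 - ξ) - 1))) (Ioi 0) := by
    exact i3.const_mul _
  have j4 : IntegrableOn (fun x : ℝ => (ξ + 1) * (Real.log x * Real.exp (-x))) (Ioi 0) := by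
    exact i4.const_mul _
  have j12 : IntegrableOn (fun x : ℝ =>
      (-(Real.log σ) - μ + s * σ / ξ) * (Real.exp (-x) * x ^ ((1:ℝ) - 1))
        + (-1 : ℝ) * (Real.exp (-x) * x ^ ((2:ℝ) - 1))) (Ioi 0) := by
    exact j1.add j2
  have j123 : IntegrableOn (fun x : ℝ =>
      ((-(Real.log σ) - μ + s * σ / ξ) * (Real.exp (-x) * x ^ ((1:ℝ) - 1))
        + (-1 : ℝ) * (Real.exp (-x) * x ^ ((2:ℝ) - 1)))
        + (-(s * σ / ξ)) * (Real.exp (-x) * x ^ ((1 - ξ) - 1))) (Ioi 0) := by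
    exact j12.add j3
  rw [integral_add j123 j4, integral_add j12 j3, integral_add j1 j2,
    integral_const_mul, integral_const_mul, integral_const_mul, integral_const_mul]
  have v1 : ∫ t in Ioi (0:ℝ), Real.exp (-t) * t ^ ((1:ℝ) - 1) = 1 := by
    rw [← Real.Gamma_eq_integral one_pos, Real.Gamma_one]
  have v2 : ∫ t in Ioi (0:ℝ), Real.exp (-t) * t ^ ((2:ℝ) - 1) = 1 := by
    rw [← Real.Gamma_eq_integral (by norm_num : (0:ℝ) < 2),
      show (2:ℝ) = 1 + 1 by norm_num, Real.Gamma_add_one one_ne_zero, Real.Gamma_one, mul_one]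
  have v3 : ∫ t in Ioi (0:ℝ), Real.exp (-t) * t ^ ((1 - ξ) - 1) = Real.Gamma (1 - ξ) :=
    (Real.Gamma_eq_integral (by linarith)).symm
  rw [v1, v2, v3, integral_log_mul_exp_neg]
  ring
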